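/- For all real numbers x with 0 < x < 1 and all real y: there exist real numbers a and b such that x = exp(a)/(exp(a)+1), x = tanh(b), and y = a - 2·b + ln(x+1), if and only if y = ln(x). -/

import Mathlib

lemma tanh_eq_exp (b : ℝ) :
    Real.tanh b = (Real.exp (2*b) - 1) / (Real.exp (2*b) + 1) := by
  rw [Real.tanh_eq_sinh_div_cosh, Real.sinh_eq, Real.cosh_eq]
  have h1 : Real.exp b ≠ 0 := (Real.exp_pos b).ne'
  have h2 : Real.exp b + Real.exp (-b) > 0 := by positivity
  have h3 : Real.exp (2*b) + 1 > 0 := by positivity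
  have he : Real.exp (2*b) = Real.exp b * Real.exp b := by
    rw [two_mul, Real.exp_add]
  rw [he, Real.exp_neg]
  have h4 : Real.exp b + (Real.exp b)⁻¹ ≠ 0 := by positivity
  have h5 : Real.exp b * Real.exp b + 1 ≠ 0 := by positivity
  field_simp

theorem theta_gadget_correct (x y : ℝ) (hx0 : 0 < x) (hx1 : x < 1) :
    (∃ a b : ℝ, x = Real.exp a / (Real.exp a + 1) ∧ x = Real.tanh b ∧
      y = a - 2 * b + Real.log (x + 1)) ↔ y = Real.log x := by
  have h1x : (0:ℝ) < 1 - x := by linarith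
  have h1x' : (0:ℝ) < 1 + x := by linarith
  constructor
  · rintro ⟨a, b, ha, hb, hy⟩
    have hea : Real.exp a = x / (1 - x) := by
      have hpos : (0:ℝ) < Real.exp a + 1 := by positivity
      field_simp at ha ⊢
      nlinarith [ha]
    have haa : a = Real.log x - Real.log (1 - x) := by
      rw [← Real.log_exp a, hea, Real.log_div hx0.ne' h1x.ne']
    have heb : Real.exp (2*b) = (1 + x) / (1 - x) := by
      rw [tanh_eq_exp] at hb
      have hpos : (0:ℝ) < Real.exp (2*b) + 1 := by positivity
      field_simp at hb ⊢
      nlinarith [hb]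
    have hbb : 2*b = Real.log (1 + x) - Real.log (1 - x) := by
      rw [← Real.log_exp (2*b), heb, Real.log_div h1x'.ne' h1x.ne']
    have : x + 1 = 1 + x := by ring
    rw [hy, this]
    linarith [hbb, haa]
  · intro hy
    refine ⟨Real.log x - Real.log (1 - x), (Real.log (1 + x) - Real.log (1 - x)) / 2,
      ?_, ?_, ?_⟩
    · have : Real.exp (Real.log x - Real.log (1 - x)) = x / (1 - x) := by
        rw [Real.exp_sub, Real.exp_log hx0, Real.exp_log h1x]
      rw [this]
      field_simp
      ring
    · have h2 : Real.exp (2 * ((Real.log (1 + x) - Real.log (1 - x)) / 2))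
          = (1 + x) / (1 - x) := by
        rw [mul_div_cancel₀ _ (two_ne_zero), Real.exp_sub, Real.exp_log h1x',
          Real.exp_log h1x]
      rw [tanh_eq_exp, h2]
      rw [eq_div_iff (by positivity)]
      field_simp
      ring
    · rw [hy]
      have : x + 1 = 1 + x := by ring
      rw [this]
      ring
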